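/- Let k be a field of odd characteristic p and let the group Z/p act on the polynomial ring k[X,Y] by k-algebra automorphisms fixing Y and sending X to X - μY, where μ ∈ k is nonzero. Then the ring of invariants is k[φ, Y], where φ = ∏_{a∈𝔽_p} (X + aμY). -/

import Mathlib

open MvPolynomial

/-- The `k`-algebra automorphism of `k[X,Y]` determined by `X ↦ X - cY`, `Y ↦ Y`
(we write `X = X 0`, `Y = X 1`). -/
noncomputable def substAct (k : Type*) [CommRing k] (c : k) :
    MvPolynomial (Fin 2) k →ₐ[k] MvPolynomial (Fin 2) k :=
  aeval (fun j => if j = 0 then X 0 - C c * X 1 else X 1)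


noncomputable def EE (k : Type*) [CommSemiring k] :
    MvPolynomial (Fin 2) k ≃ₐ[k] Polynomial (Polynomial k) :=
  AlgEquiv.ofAlgHom
    (MvPolynomial.aeval ![Polynomial.X, Polynomial.C Polynomial.X])
    (Polynomial.aevalTower (Polynomial.aeval (MvPolynomial.X 1)) (MvPolynomial.X 0))
    (by
      apply Polynomial.algHom_ext'
      · apply Polynomial.algHom_ext'
        · apply AlgHom.ext; intro x
          simp [Polynomial.aevalTower_C]
        · simp [Polynomial.aevalTower_C]
      · simp)
    (by
      apply MvPolynomial.algHom_ext
      intro i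
      fin_cases i <;> simp)

@[simp] lemma EE_X0 (k : Type*) [CommSemiring k] :
    EE k (MvPolynomial.X 0) = Polynomial.X := by simp [EE]

@[simp] lemma EE_X1 (k : Type*) [CommSemiring k] :
    EE k (MvPolynomial.X 1) = Polynomial.C Polynomial.X := by simp [EE]

@[simp] lemma EE_C (k : Type*) [CommSemiring k] (a : k) :
    EE k (MvPolynomial.C a) = Polynomial.C (Polynomial.C a) := by
  simp [EE, MvPolynomial.algebraMap_eq]

/-- transported action -/
noncomputable def tau (k : Type*) [CommRing k] (μ : k) :
    Polynomial (Polynomial k) →ₐ[Polynomial k] Polynomial (Polynomial k) :=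
  Polynomial.aeval (Polynomial.X - Polynomial.C (Polynomial.C μ * Polynomial.X))

lemma EE_substAct (k : Type*) [CommRing k] (μ : k) (f : MvPolynomial (Fin 2) k) :
    EE k (substAct k μ f) = tau k μ (EE k f) := by
  have : (EE k).toAlgHom.comp (substAct k μ) =
      ((tau k μ).restrictScalars k).comp (EE k).toAlgHom := by
    apply MvPolynomial.algHom_ext
    intro i
    fin_cases i
    · show EE k (substAct k μ (X 0)) = tau k μ (EE k (X 0))
      rw [show (substAct k μ) (X 0) = X 0 - C μ * X 1 by simp [substAct]]
      simp [tau, Polynomial.C_mul]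
    · show EE k (substAct k μ (X 1)) = tau k μ (EE k (X 1))
      rw [show (substAct k μ) (X 1) = X 1 by simp [substAct]]
      simp [tau]
  exact congrArg (fun g => g f) (congrArg DFunLike.coe this)

open Polynomial in
lemma C_mem_adjoin {k : Type*} [CommRing k] (s : Set (Polynomial (Polynomial k)))
    (hs : (Polynomial.C Polynomial.X : Polynomial (Polynomial k)) ∈ s) (r : Polynomial k) :
    (Polynomial.C r : Polynomial (Polynomial k)) ∈ Algebra.adjoin k s := by
  have h1 : (Polynomial.C r : Polynomial (Polynomial k)) ∈
      (Algebra.adjoin k {(Polynomial.X : Polynomial k)}).map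
        (Polynomial.CAlgHom : Polynomial k →ₐ[k] Polynomial (Polynomial k)) := by
    rw [Polynomial.adjoin_X]
    exact ⟨r, trivial, rfl⟩
  rw [AlgHom.map_adjoin, Set.image_singleton] at h1
  refine Algebra.adjoin_mono ?_ h1
  simpa [Polynomial.CAlgHom] using Set.singleton_subset_iff.mpr hs

open Polynomial in
lemma main_lemma {k : Type*} [Field k] (p : ℕ) [Fact p.Prime] [CharP k p] (μ : k) (hμ : μ ≠ 0)
    (Φ : Polynomial (Polynomial k)) (hmon : Φ.Monic) (hdeg : Φ.natDegree = p)
    (hΦ : tau k μ Φ = Φ) :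
    ∀ f : Polynomial (Polynomial k), tau k μ f = f →
      f ∈ Algebra.adjoin k {Φ, (Polynomial.C Polynomial.X : Polynomial (Polynomial k))} := by
  set c : Polynomial k := Polynomial.C μ * Polynomial.X with hc
  have hc0 : c ≠ 0 := by
    simp only [hc]
    exact mul_ne_zero (by simpa using hμ) Polynomial.X_ne_zero
  suffices H : ∀ n (f : Polynomial (Polynomial k)), f.natDegree = n → tau k μ f = f →
      f ∈ Algebra.adjoin k {Φ, (Polynomial.C Polynomial.X : Polynomial (Polynomial k))} by
    intro f hf; exact H f.natDegree f rfl hf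
  intro n
  induction n using Nat.strong_induction_on with
  | _ n ih =>
  intro f hdegf hinv
  rcases Nat.eq_zero_or_pos n with hn0 | hn
  · subst hn0
    obtain ⟨a, ha⟩ := Polynomial.natDegree_eq_zero.mp hdegf
    rw [← ha]
    exact C_mem_adjoin _ (by simp) a
  -- positive degree case
  · have hf0 : f ≠ 0 := by
      intro h; rw [h] at hdegf; simp at hdegf; omega
    -- step 1 : p ∣ n
    have hcomp : f.comp (Polynomial.X - Polynomial.C c) = f := by
      rw [Polynomial.comp, ← Polynomial.algebraMap_eq, ← Polynomial.aeval_def]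
      exact hinv
    have htay : Polynomial.taylor (-c) f = f := by
      rw [Polynomial.taylor_apply, Polynomial.C_neg, ← sub_eq_add_neg]
      exact hcomp
    have hco := congrArg (fun g => Polynomial.coeff g (n - 1)) htay
    simp only [Polynomial.taylor_coeff] at hco
    set q := Polynomial.hasseDeriv (n - 1) f with hq
    have hqdeg : q.natDegree < 2 := by
      have := Polynomial.natDegree_hasseDeriv_le f (n - 1)
      rw [← hq, hdegf] at this
      omega
    have heval : q.eval (-c) = q.coeff 0 + q.coeff 1 * (-c) := by
      rw [Polynomial.eval_eq_sum_range' hqdeg]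
      simp [Finset.sum_range_succ]
    have hq0 : q.coeff 0 = f.coeff (n - 1) := by
      rw [hq, Polynomial.hasseDeriv_coeff]
      simp
    have hch : (1 + (n - 1)).choose (n - 1) = n := by
      rw [show 1 + (n - 1) = n by omega, Nat.choose_symm (by omega : 1 ≤ n),
        Nat.choose_one_right]
    have hq1 : q.coeff 1 = (n : Polynomial k) * f.coeff n := by
      rw [hq, Polynomial.hasseDeriv_coeff, hch, show 1 + (n - 1) = n by omega]
    rw [heval, hq0, hq1] at hco
    have hzero : (n : Polynomial k) * f.coeff n * c = 0 := by
      have : f.coeff (n - 1) + (n : Polynomial k) * f.coeff n * (-c) = f.coeff (n - 1) := hco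
      have h2 : (n : Polynomial k) * f.coeff n * (-c) = 0 := by linear_combination this
      simpa using h2
    have hlc : f.coeff n ≠ 0 := by
      rw [← hdegf]
      exact Polynomial.leadingCoeff_ne_zero.mpr hf0
    have hpn : p ∣ n := by
      rcases mul_eq_zero.mp hzero with h | h
      · rcases mul_eq_zero.mp h with h' | h'
        · exact (CharP.cast_eq_zero_iff (Polynomial k) p n).mp h'
        · exact absurd h' hlc
      · exact absurd h hc0
    obtain ⟨m, hm⟩ := hpn
    -- step 2 : subtract leading part
    set a := f.leadingCoeff with ha
    have ha0 : a ≠ 0 := Polynomial.leadingCoeff_ne_zero.mpr hf0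
    set g := f - Polynomial.C a * Φ ^ m with hg
    have hmonpow : (Φ ^ m).Monic := hmon.pow m
    have hdeg2 : (Polynomial.C a * Φ ^ m).natDegree = n := by
      rw [Polynomial.natDegree_C_mul ha0, hmon.natDegree_pow, hdeg, hm, Nat.mul_comm]
    have hCane : Polynomial.C a * Φ ^ m ≠ 0 :=
      mul_ne_zero (by simpa using ha0) hmonpow.ne_zero
    have hlead : (Polynomial.C a * Φ ^ m).leadingCoeff = a := by
      rw [Polynomial.leadingCoeff_mul, Polynomial.leadingCoeff_C, hmonpow.leadingCoeff, mul_one]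
    have hdeq : f.degree = (Polynomial.C a * Φ ^ m).degree := by
      rw [Polynomial.degree_eq_natDegree hf0, Polynomial.degree_eq_natDegree hCane, hdeg2, hdegf]
    have hΦmem : Φ ∈ Algebra.adjoin k
        {Φ, (Polynomial.C Polynomial.X : Polynomial (Polynomial k))} :=
      Algebra.subset_adjoin (by simp)
    have hterm : Polynomial.C a * Φ ^ m ∈ Algebra.adjoin k
        {Φ, (Polynomial.C Polynomial.X : Polynomial (Polynomial k))} :=
      mul_mem (C_mem_adjoin _ (by simp) a) (pow_mem hΦmem m)
    by_cases hg0 : g = 0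
    · have : f = Polynomial.C a * Φ ^ m := by
        rw [hg, sub_eq_zero] at hg0; exact hg0
      rw [this]; exact hterm
    · have hginv : tau k μ g = g := by
        rw [hg, map_sub, hinv, map_mul, map_pow, hΦ]
        congr 2
        exact Polynomial.aeval_C _ _
      have hgdeg : g.natDegree < n := by
        have hlt : g.degree < f.degree :=
          Polynomial.degree_sub_lt hdeq hf0 (by rw [hlead])
        have := Polynomial.natDegree_lt_natDegree hg0 hlt
        omega
      have hgmem := ih g.natDegree hgdeg g rfl hginv
      have : f = g + Polynomial.C a * Φ ^ m := by rw [hg]; ring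
      rw [this]
      exact add_mem hgmem hterm


/-- Let `k` be a field of odd characteristic `p`, and let the generator `g` of
`ℤ/p` act on `k[X,Y]` by `g(Y) = Y`, `g(X) = X - μY` with `μ ≠ 0`.  Then the ring of invariants
is `k[φ, Y]` where `φ = ∏_{a ∈ 𝔽_p} (X + aμY)`. -/
theorem invariants_Zp (p : ℕ) [Fact p.Prime] (hp : Odd p)
    (k : Type*) [Field k] [CharP k p] (μ : k) (hμ : μ ≠ 0) :
    AlgHom.equalizer (substAct k μ) (AlgHom.id k (MvPolynomial (Fin 2) k)) =
      Algebra.adjoin k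
        {∏ a : ZMod p, (X 0 + C (ZMod.castHom (dvd_refl p) k a * μ) * X 1),
         (X 1 : MvPolynomial (Fin 2) k)} := by
  classical
  set φp : MvPolynomial (Fin 2) k :=
    ∏ a : ZMod p, (X 0 + C (ZMod.castHom (dvd_refl p) k a * μ) * X 1) with hφp
  have h0 : substAct k μ (X 0 : MvPolynomial (Fin 2) k) = X 0 - C μ * X 1 := by
    simp [substAct]
  have h1 : substAct k μ (X 1 : MvPolynomial (Fin 2) k) = X 1 := by
    simp [substAct]
  have hC : ∀ v : k, substAct k μ (C v) = C v := by
    intro v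
    rw [show (C v : MvPolynomial (Fin 2) k) = algebraMap k _ v from rfl]
    rw [AlgHom.commutes]
  have hsub : ∀ a : ZMod p,
      substAct k μ (X 0 + C (ZMod.castHom (dvd_refl p) k a * μ) * X 1)
        = X 0 + C (ZMod.castHom (dvd_refl p) k (a - 1) * μ) * X 1 := by
    intro a
    rw [map_add, map_mul, h0, h1, hC]
    have hcast : (ZMod.castHom (dvd_refl p) k) (a - 1) * μ
        = (ZMod.castHom (dvd_refl p) k) a * μ - μ := by
      rw [map_sub, map_one, sub_mul, one_mul]
    rw [hcast, C_sub]
    ring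
  have hinvφ : substAct k μ φp = φp := by
    rw [hφp, map_prod]
    calc (∏ a : ZMod p, substAct k μ (X 0 + C (ZMod.castHom (dvd_refl p) k a * μ) * X 1))
        = ∏ a : ZMod p, (X 0 + C (ZMod.castHom (dvd_refl p) k (a - 1) * μ) * X 1) :=
          Finset.prod_congr rfl (fun a _ => hsub a)
      _ = ∏ a : ZMod p, (X 0 + C (ZMod.castHom (dvd_refl p) k a * μ) * X 1) :=
          Fintype.prod_equiv (Equiv.subRight (1 : ZMod p)) _ _ (fun a => rfl)
  set Φ : Polynomial (Polynomial k) := EE k φp with hΦdef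
  have hΦprod : Φ = ∏ a : ZMod p, (Polynomial.X +
      Polynomial.C (Polynomial.C (ZMod.castHom (dvd_refl p) k a * μ) * Polynomial.X)) := by
    rw [hΦdef, hφp, map_prod]
    refine Finset.prod_congr rfl (fun a _ => ?_)
    simp
  have hmon : Φ.Monic := by
    rw [hΦprod]
    exact Polynomial.monic_prod_of_monic _ _ (fun a _ => Polynomial.monic_X_add_C _)
  have hdegΦ : Φ.natDegree = p := by
    rw [hΦprod, Polynomial.natDegree_prod_of_monic _ _
      (fun a _ => Polynomial.monic_X_add_C _),
      Finset.sum_congr rfl (fun (a : ZMod p) _ => Polynomial.natDegree_X_add_C _),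
      Finset.sum_const, Finset.card_univ, ZMod.card, smul_eq_mul, mul_one]
  have hτΦ : tau k μ Φ = Φ := by rw [hΦdef, ← EE_substAct, hinvφ]
  apply le_antisymm
  · intro f hf
    have hf' : substAct k μ f = f := hf
    have hτf : tau k μ (EE k f) = EE k f := by rw [← EE_substAct, hf']
    have hmem := main_lemma p μ hμ Φ hmon hdegΦ hτΦ (EE k f) hτf
    have hs1 : (EE k).symm Φ = φp := by rw [hΦdef]; exact (EE k).symm_apply_apply φp
    have hs2 : (EE k).symm (Polynomial.C Polynomial.X) = (X 1 : MvPolynomial (Fin 2) k) := by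
      rw [← EE_X1]; exact (EE k).symm_apply_apply _
    have himg : (Algebra.adjoin k
          ({Φ, Polynomial.C Polynomial.X} : Set (Polynomial (Polynomial k)))).map
          (EE k).symm.toAlgHom
        = Algebra.adjoin k {φp, (X 1 : MvPolynomial (Fin 2) k)} := by
      rw [AlgHom.map_adjoin]
      congr 1
      change (EE k).symm '' _ = _
      rw [Set.image_insert_eq, Set.image_singleton, hs1, hs2]
    rw [← himg]
    exact ⟨EE k f, hmem, (EE k).symm_apply_apply f⟩
  · apply Algebra.adjoin_le
    intro x hx
    rcases hx with rfl | hx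
    · exact hinvφ
    · rcases hx with rfl
      exact h1
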